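/- Let G be a finite simple graph with no induced 4-cycle and no induced copy of F, where F is the 5-vertex graph consisting of an isolated vertex together with two triangles sharing an edge. If G is not complete, then G has a vertex v of minimal degree such that the open neighborhood of v induces a chordal graph. Consequently, every such graph has a vertex whose open neighborhood is chordal. -/

import Mathlib

open SimpleGraph
open Fin.CommRing

/-- The graph `F`: two triangles sharing the edge `12`, together with the isolated
vertex `4`. -/
def Fgraph : SimpleGraph (Fin 5) :=
  SimpleGraph.fromEdgeSet {s(0, 1), s(0, 2), s(1, 2), s(1, 3), s(2, 3)}

/-- Build a graph embedding from an injective map that transports adjacency. -/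
def embOfAdj {W V : Type*} {G : SimpleGraph W} {H : SimpleGraph V} (f : W → V)
    (hinj : Function.Injective f) (h : ∀ a b, H.Adj (f a) (f b) ↔ G.Adj a b) :
    G ↪g H := ⟨⟨f, hinj⟩, h _ _⟩

lemma fin_shift_eq {m : ℕ} (a : Fin (m + 5)) {k l : ℕ} (hk : k < m + 5) (hl : l < m + 5)
    (h : a + (k : Fin (m + 5)) = a + (l : Fin (m + 5))) : k = l := by
  have h2 := add_left_cancel h
  rwa [Fin.ext_iff, Fin.val_cast_of_lt hk, Fin.val_cast_of_lt hl] at h2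

lemma fin_shift_absurd {m : ℕ} (a : Fin (m + 5)) {k l : ℕ} (hk : k < m + 5) (hl : l < m + 5)
    (hkl : k ≠ l) (h : a + (k : Fin (m + 5)) = a + (l : Fin (m + 5))) : False :=
  hkl (fin_shift_eq a hk hl h)

lemma cyc_adj_iff' {m : ℕ} (x y : Fin (m + 5)) :
    (cycleGraph (m + 5)).Adj x y ↔
      x = y + ((1 : ℕ) : Fin (m + 5)) ∨ y = x + ((1 : ℕ) : Fin (m + 5)) := by
  rw [cycleGraph_adj']
  constructor
  · rintro (h | h)
    · left
      have hx : x - y = ((1 : ℕ) : Fin (m + 5)) := by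
        rw [Fin.ext_iff, Fin.val_cast_of_lt (by omega)]; exact h
      rw [sub_eq_iff_eq_add'] at hx
      exact hx
    · right
      have hx : y - x = ((1 : ℕ) : Fin (m + 5)) := by
        rw [Fin.ext_iff, Fin.val_cast_of_lt (by omega)]; exact h
      rw [sub_eq_iff_eq_add'] at hx
      exact hx
  · rintro (h | h)
    · left
      have : x - y = ((1 : ℕ) : Fin (m + 5)) := by rw [h]; ring
      rw [this, Fin.val_cast_of_lt (by omega)]
    · right
      have : y - x = ((1 : ℕ) : Fin (m + 5)) := by rw [h]; ring
      rw [this, Fin.val_cast_of_lt (by omega)]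

lemma cyc_adj_succ {m : ℕ} (x : Fin (m + 5)) :
    (cycleGraph (m + 5)).Adj x (x + ((1 : ℕ) : Fin (m + 5))) :=
  (cyc_adj_iff' x _).2 (Or.inr rfl)

lemma cyc_not_adj_two {m : ℕ} (x : Fin (m + 5)) :
    ¬ (cycleGraph (m + 5)).Adj x (x + ((2 : ℕ) : Fin (m + 5))) := by
  rw [cyc_adj_iff']
  rintro (h | h)
  · exact fin_shift_absurd x (k := 0) (l := 3) (by omega) (by omega) (by omega)
      (by push_cast; linear_combination h)
  · exact fin_shift_absurd x (k := 2) (l := 1) (by omega) (by omega) (by omega)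
      (by push_cast; linear_combination h)

/-- Build an embedding of `Fgraph` from suitable vertices. -/
def Femb {V : Type*} (G : SimpleGraph V) (x0 x1 x2 v w : V)
    (d01 : x0 ≠ x1) (d02 : x0 ≠ x2) (d12 : x1 ≠ x2)
    (dv0 : v ≠ x0) (dv1 : v ≠ x1) (dv2 : v ≠ x2)
    (dw0 : w ≠ x0) (dw1 : w ≠ x1) (dw2 : w ≠ x2) (dwv : w ≠ v)
    (a01 : G.Adj x0 x1) (a12 : G.Adj x1 x2)
    (av0 : G.Adj v x0) (av1 : G.Adj v x1) (av2 : G.Adj v x2)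
    (n02 : ¬G.Adj x0 x2) (nw0 : ¬G.Adj w x0) (nw1 : ¬G.Adj w x1) (nw2 : ¬G.Adj w x2)
    (nwv : ¬G.Adj v w) : Fgraph ↪g G := by
  refine embOfAdj ![x0, v, x1, x2, w] ?_ ?_
  · intro a b hab
    fin_cases a <;> fin_cases b <;> simp_all
  · intro a b
    fin_cases a <;> fin_cases b <;>
      simp_all [Fgraph, fromEdgeSet_adj, G.adj_comm, G.loopless, eq_comm]

/-- Build an embedding of the 4-cycle from suitable vertices. -/
def C4emb {V : Type*} (G : SimpleGraph V) (v x w y : V)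
    (dvx : v ≠ x) (dvw : v ≠ w) (dvy : v ≠ y) (dxw : x ≠ w) (dxy : x ≠ y) (dwy : w ≠ y)
    (avx : G.Adj v x) (axw : G.Adj x w) (awy : G.Adj w y) (ayv : G.Adj y v)
    (nvw : ¬G.Adj v w) (nxy : ¬G.Adj x y) : cycleGraph 4 ↪g G := by
  refine embOfAdj ![v, x, w, y] ?_ ?_
  · intro a b hab
    fin_cases a <;> fin_cases b <;> simp_all
  · intro a b
    fin_cases a <;> fin_cases b <;>
      simp_all [G.adj_comm, G.loopless, cycleGraph, Fin.ext_iff, Fin.sub_def, eq_comm] <;> decide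

theorem exists_minDegree_vertex_chordal_neighborhood {V : Type*} [Fintype V]
    [DecidableEq V] (G : SimpleGraph V) [DecidableRel G.Adj]
    (hC4 : IsEmpty (cycleGraph 4 ↪g G))
    (hF : IsEmpty (Fgraph ↪g G))
    (hnc : G ≠ ⊤) :
    ∃ v : V, (∀ u : V, G.degree v ≤ G.degree u) ∧
      ∀ n : ℕ, 4 ≤ n → IsEmpty (cycleGraph n ↪g G.induce (G.neighborSet v)) := by
  have hne : Nonempty V := by
    by_contra h
    rw [not_nonempty_iff] at h
    exact hnc (by ext x y; exact (h.false x).elim)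
  obtain ⟨v, -, hv⟩ := Finset.exists_min_image Finset.univ (fun x => G.degree x)
    Finset.univ_nonempty
  have hvmin : ∀ u : V, G.degree v ≤ G.degree u := fun u => hv u (Finset.mem_univ u)
  refine ⟨v, hvmin, ?_⟩
  -- there is a vertex not adjacent (and not equal) to v
  have hw : ∃ w, ¬ G.Adj v w ∧ w ≠ v := by
    by_contra h
    push_neg at h
    -- v is adjacent to everything else, so degree v = card V - 1, hence everyone is
    have hvdeg : G.degree v = Fintype.card V - 1 := by
      have hsub : Finset.univ.erase v ⊆ G.neighborFinset v := by
        intro x hx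
        rw [Finset.mem_erase] at hx
        rw [mem_neighborFinset]
        by_contra hadj
        exact hx.1 (h x hadj)
      have h1 : Fintype.card V - 1 ≤ G.degree v := by
        have := Finset.card_le_card hsub
        rwa [Finset.card_erase_of_mem (Finset.mem_univ v), Finset.card_univ] at this
      have h2 : G.degree v < Fintype.card V := G.degree_lt_card_verts v
      omega
    have hall : ∀ u : V, ∀ y, y ≠ u → G.Adj u y := by
      intro u y hy
      have hdeg : G.degree u = Fintype.card V - 1 := by
        have h1 := hvmin u
        have h2 := G.degree_lt_card_verts u
        omega
      have hsub : G.neighborFinset u ⊆ Finset.univ.erase u := by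
        intro x hx
        rw [mem_neighborFinset] at hx
        exact Finset.mem_erase.2 ⟨(G.ne_of_adj hx).symm, Finset.mem_univ x⟩
      have hcard : (Finset.univ.erase u).card ≤ (G.neighborFinset u).card := by
        rw [Finset.card_erase_of_mem (Finset.mem_univ u), Finset.card_univ,
          card_neighborFinset_eq_degree, hdeg]
      have heq := Finset.eq_of_subset_of_card_le hsub hcard
      have : y ∈ G.neighborFinset u := by
        rw [heq]
        exact Finset.mem_erase.2 ⟨hy, Finset.mem_univ y⟩
      rwa [mem_neighborFinset] at this
    apply hnc
    ext x y
    simp only [top_adj]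
    exact ⟨G.ne_of_adj, fun hxy => hall x y (Ne.symm hxy)⟩
  obtain ⟨w, hwv, hwvne⟩ := hw
  intro n hn
  constructor
  intro f
  -- the vertices of the cycle, as vertices of G
  set u : Fin n → V := fun i => (f i : V) with hu
  have huv : ∀ i, G.Adj v (u i) := fun i => (f i).2
  have huinj : Function.Injective u := fun i j h => f.injective (Subtype.ext h)
  have hadj : ∀ i j, G.Adj (u i) (u j) ↔ (cycleGraph n).Adj i j := fun i j => f.map_adj_iff
  have hvu : ∀ i, v ≠ u i := fun i h => G.loopless.irrefl _ (h ▸ huv i)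
  have hwu : ∀ i, w ≠ u i := fun i h => hwv (h ▸ (huv i))
  rcases Nat.lt_or_ge n 5 with h5 | h5
  · -- n = 4 : direct induced 4-cycle in G
    have : n = 4 := by omega
    subst this
    exact hC4.false (embOfAdj u huinj hadj)
  · obtain ⟨m, rfl⟩ : ∃ m, n = m + 5 := ⟨n - 5, by omega⟩
    -- Claim A
    have claimA : ∀ i : Fin (m + 5), ∃ k : ℕ, k < 3 ∧ G.Adj w (u (i + (k : Fin (m + 5)))) := by
      intro i
      by_contra h
      push_neg at h
      have h0 : ¬ G.Adj w (u i) := by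
        have := h 0 (by omega)
        simpa using this
      have h1 : ¬ G.Adj w (u (i + ((1 : ℕ) : Fin (m + 5)))) := h 1 (by omega)
      have h2 : ¬ G.Adj w (u (i + ((2 : ℕ) : Fin (m + 5)))) := h 2 (by omega)
      apply hF.false
      have e01 : u i ≠ u (i + ((1 : ℕ) : Fin (m + 5))) := fun h =>
        fin_shift_absurd i (k := 0) (l := 1) (by omega) (by omega) (by omega)
          (by have := huinj h; push_cast; linear_combination this)
      have e02 : u i ≠ u (i + ((2 : ℕ) : Fin (m + 5))) := fun h =>
        fin_shift_absurd i (k := 0) (l := 2) (by omega) (by omega) (by omega)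
          (by have := huinj h; push_cast; linear_combination this)
      have e12 : u (i + ((1 : ℕ) : Fin (m + 5))) ≠ u (i + ((2 : ℕ) : Fin (m + 5))) := fun h =>
        fin_shift_absurd i (k := 1) (l := 2) (by omega) (by omega) (by omega)
          (by have := huinj h; push_cast; linear_combination this)
      have a01 : G.Adj (u i) (u (i + ((1 : ℕ) : Fin (m + 5)))) :=
        (hadj _ _).2 (cyc_adj_succ i)
      have a12 : G.Adj (u (i + ((1 : ℕ) : Fin (m + 5)))) (u (i + ((2 : ℕ) : Fin (m + 5)))) := by
        refine (hadj _ _).2 ((cyc_adj_iff' _ _).2 (Or.inr ?_))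
        push_cast; ring
      have na02 : ¬ G.Adj (u i) (u (i + ((2 : ℕ) : Fin (m + 5)))) := fun h =>
        cyc_not_adj_two i ((hadj _ _).1 h)
      exact Femb G (u i) (u (i + ((1 : ℕ) : Fin (m + 5)))) (u (i + ((2 : ℕ) : Fin (m + 5)))) v w
        e01 e02 e12 (hvu _) (hvu _) (hvu _) (hwu _) (hwu _) (hwu _) hwvne
        a01 a12 (huv _) (huv _) (huv _) na02 h0 h1 h2 hwv
    -- Claim B: two nonadjacent common neighbors of w in the cycle
    obtain ⟨i, j, hwi, hwj, hij, hnadj⟩ :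
        ∃ i j : Fin (m + 5), G.Adj w (u i) ∧ G.Adj w (u j) ∧ i ≠ j ∧ ¬ G.Adj (u i) (u j) := by
      by_contra hB
      push_neg at hB
      have hS : ∀ p q : Fin (m + 5), G.Adj w (u p) → G.Adj w (u q) →
          p = q ∨ p = q + ((1 : ℕ) : Fin (m + 5)) ∨ q = p + ((1 : ℕ) : Fin (m + 5)) := by
        intro p q hp hq
        by_cases h : p = q
        · exact Or.inl h
        · exact Or.inr ((cyc_adj_iff' p q).1 ((hadj p q).1 (hB p q hp hq h)))
      obtain ⟨k0, -, hi0⟩ := claimA 0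
      set i0 : Fin (m + 5) := 0 + (k0 : Fin (m + 5)) with hi0def
      have hsub : ∃ a : Fin (m + 5), ∀ q, G.Adj w (u q) →
          q = a ∨ q = a + ((1 : ℕ) : Fin (m + 5)) := by
        by_cases hminus : ∃ p, G.Adj w (u p) ∧ i0 = p + ((1 : ℕ) : Fin (m + 5))
        · obtain ⟨p, hp, hpe⟩ := hminus
          refine ⟨p, fun q hq => ?_⟩
          rcases hS q p hq hp with h | h | h
          · exact Or.inl h
          · exact Or.inr h
          · -- p = q + 1
            rcases hS q i0 hq hi0 with h2 | h2 | h2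
            · exact (fin_shift_absurd i0 (k := 0) (l := 2)
                (by omega) (by omega) (by omega)
                (by push_cast; linear_combination hpe + h + h2)).elim
            · exact (fin_shift_absurd i0 (k := 0) (l := 3)
                (by omega) (by omega) (by omega)
                (by push_cast; linear_combination hpe + h + h2)).elim
            · exact (fin_shift_absurd q (k := 0) (l := 1)
                (by omega) (by omega) (by omega)
                (by push_cast; linear_combination hpe + h - h2)).elim
        · refine ⟨i0, fun q hq => ?_⟩
          rcases hS q i0 hq hi0 with h | h | h
          · exact Or.inl h
          · exact Or.inr h
          · exact absurd ⟨q, hq, h⟩ hminus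
      obtain ⟨a, ha⟩ := hsub
      obtain ⟨k, hk3, hadjw⟩ := claimA (a + ((2 : ℕ) : Fin (m + 5)))
      rcases ha _ hadjw with h | h
      · exact fin_shift_absurd a (k := 2 + k) (l := 0) (by omega) (by omega) (by omega)
          (by push_cast; linear_combination h)
      · exact fin_shift_absurd a (k := 2 + k) (l := 1) (by omega) (by omega) (by omega)
          (by push_cast; linear_combination h)
    -- Build an induced 4-cycle v - (u i) - w - (u j) - v
    exact hC4.false (C4emb G v (u i) w (u j) (hvu i) (Ne.symm hwvne) (hvu j)
      (Ne.symm (hwu i)) (fun h => hij (huinj h)) (hwu j)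
      (huv i) hwi.symm hwj (huv j).symm hwv hnadj)
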